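/- arXiv:2309.12465 — 4 statements merged into one kernel-verified Lean document; each statement's English description precedes it below -/
import Mathlib

section
/- Let g be a Lie ring, h ∈ g, δ = ad_h, and n ≥ 1 an integer such that ker(δⁿ) is an abelian Lie subring of g (that is, any two elements x, y ∈ g with δⁿ x = δⁿ y = 0 satisfy [x,y] = 0). Then ker(δ^{n+1}) is closed under the Lie bracket: for all x, y ∈ g with δ^{n+1} x = δ^{n+1} y = 0, one has δ^{n+1}([x,y]) = 0. -/
/-- If ker(δⁿ) is abelian for δ = ad_h, then ker(δ^{n+1}) is closed under the bracket. -/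
theorem stmt_2 {L : Type*} [LieRing L] (h : L) (n : ℕ) (hn : 1 ≤ n)
    (habelian : ∀ x y : L,
      (fun z => ⁅h, z⁆)^[n] x = 0 → (fun z => ⁅h, z⁆)^[n] y = 0 → ⁅x, y⁆ = 0) :
    ∀ x y : L,
      (fun z => ⁅h, z⁆)^[n + 1] x = 0 → (fun z => ⁅h, z⁆)^[n + 1] y = 0 →
      (fun z => ⁅h, z⁆)^[n + 1] ⁅x, y⁆ = 0 := by
  intro x y hx hy
  set D : LieDerivation ℤ L L := LieDerivation.ad ℤ L h with hD
  have hfun : (fun z : L => ⁅h, z⁆) = ⇑D := by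
    funext z
    simp [hD, LieDerivation.coe_ad_apply_eq_ad_apply]
  rw [hfun] at hx hy ⊢
  -- iterates kill: D^[m] x = 0 for m ≥ n+1
  have hxk : ∀ m, n + 1 ≤ m → (⇑D)^[m] x = 0 := by
    intro m hm
    obtain ⟨k, rfl⟩ := Nat.exists_eq_add_of_le hm
    rw [Nat.add_comm, Function.iterate_add_apply, hx, Function.iterate_fixed (map_zero D) k]
  have hyk : ∀ m, n + 1 ≤ m → (⇑D)^[m] y = 0 := by
    intro m hm
    obtain ⟨k, rfl⟩ := Nat.exists_eq_add_of_le hm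
    rw [Nat.add_comm, Function.iterate_add_apply, hy, Function.iterate_fixed (map_zero D) k]
  rw [D.iterate_apply_lie' (n + 1) x y]
  apply Finset.sum_eq_zero
  intro i hi
  rw [Finset.mem_range] at hi
  rcases Nat.eq_zero_or_pos i with rfl | hi1
  · simp only [Function.iterate_zero_apply, Nat.sub_zero, hy]
    simp
  rcases Nat.lt_or_ge i (n + 1) with hlt | hge
  · -- 1 ≤ i ≤ n : both D^[i] x and D^[n+1-i] y are in ker D^n
    have h1 : (⇑D)^[n] ((⇑D)^[i] x) = 0 := by
      rw [← Function.iterate_add_apply]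
      exact hxk _ (by omega)
    have h2 : (⇑D)^[n] ((⇑D)^[n + 1 - i] y) = 0 := by
      rw [← Function.iterate_add_apply]
      exact hyk _ (by omega)
    rw [hfun] at habelian
    rw [habelian _ _ h1 h2, smul_zero]
  · have : i = n + 1 := by omega
    subst this
    rw [hxk _ le_rfl]
    simp
end

section
/- Let g be a simple Lie ring (nonabelian, with no ideals other than 0 and g), let h be a Lie subring of g with h ≠ g, and let I = {x ∈ h : [x, g] ⊆ h}. Define the descending series I^{[0]} = I, I^{[n+1]} = [I, I^{[n]}]. Then for every n ≥ 0 one has [I^{[n+1]}, g] ⊆ I^{[n]}. Consequently, if I^{[n+1]} = I^{[n]} for some n, then I^{[n]} is an ideal of g contained in h, hence I^{[n]} = 0, so I is nilpotent. -/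
/-- The additive subgroup generated by brackets of elements of two additive subgroups. -/
def lieBracketSubgroup {L : Type*} [LieRing L] (A B : AddSubgroup L) : AddSubgroup L :=
  AddSubgroup.closure {z : L | ∃ a ∈ A, ∃ b ∈ B, z = ⁅a, b⁆}

/-- The descending series I^{[0]} = I, I^{[n+1]} = [I, I^{[n]}]. -/
def lieLowerSeries {L : Type*} [LieRing L] (I : AddSubgroup L) : ℕ → AddSubgroup L
  | 0 => I
  | n + 1 => lieBracketSubgroup I (lieLowerSeries I n)

lemma bracket_mem_lieBracketSubgroup {L : Type*} [LieRing L] {A B : AddSubgroup L}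
    {a b : L} (ha : a ∈ A) (hb : b ∈ B) : ⁅a, b⁆ ∈ lieBracketSubgroup A B :=
  AddSubgroup.subset_closure ⟨a, ha, b, hb, rfl⟩

lemma lieBracketSubgroup_le {L : Type*} [LieRing L] {A B K : AddSubgroup L}
    (h : ∀ a ∈ A, ∀ b ∈ B, ⁅a, b⁆ ∈ K) : lieBracketSubgroup A B ≤ K := by
  apply (AddSubgroup.closure_le K).2
  rintro z ⟨a, ha, b, hb, rfl⟩
  exact h a ha b hb

/-- Bracketing on the right with `y` as an additive hom. -/
def lieHomRight {L : Type*} [LieRing L] (y : L) : L →+ L :=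
  AddMonoidHom.mk' (fun x => ⁅x, y⁆) (fun a b => add_lie a b y)

/-- In a simple Lie ring g, for h a proper subring and I = {x ∈ h : [x,g] ⊆ h},
one has [I^{[n+1]}, g] ⊆ I^{[n]}; and if the series stabilises at n then I^{[n]} = 0. -/
theorem stmt_6 {L : Type*} [LieRing L]
    (hnonab : ∃ x y : L, ⁅x, y⁆ ≠ 0)
    (hsimple : ∀ J : AddSubgroup L, (∀ x : L, ∀ j ∈ J, ⁅x, j⁆ ∈ J) → J = ⊥ ∨ J = ⊤)
    (s : AddSubgroup L)
    (hs : ∀ x ∈ s, ∀ y ∈ s, ⁅x, y⁆ ∈ s)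
    (hsne : s ≠ ⊤)
    (I : AddSubgroup L)
    (hI : ∀ x : L, x ∈ I ↔ x ∈ s ∧ ∀ y : L, ⁅x, y⁆ ∈ s) :
    (∀ n : ℕ, ∀ x ∈ lieLowerSeries I (n + 1), ∀ y : L, ⁅x, y⁆ ∈ lieLowerSeries I n) ∧
    (∀ n : ℕ, lieLowerSeries I (n + 1) = lieLowerSeries I n → lieLowerSeries I n = ⊥) := by
  -- I is stable under bracketing with s
  have hIs : ∀ a ∈ I, ∀ c ∈ s, ⁅a, c⁆ ∈ I := by
    intro a ha c hc
    obtain ⟨has, haI⟩ := (hI a).1 ha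
    refine (hI ⁅a, c⁆).2 ⟨haI c, fun z => ?_⟩
    rw [lie_lie]
    exact sub_mem (haI ⁅c, z⁆) (hs c hc ⁅a, z⁆ (haI z))
  -- each term of the series is contained in I
  have hsub : ∀ n, lieLowerSeries I n ≤ I := by
    intro n
    induction n with
    | zero => exact le_rfl
    | succ n ih =>
      apply lieBracketSubgroup_le
      intro a ha b hb
      exact hIs a ha b (((hI b).1 (ih hb)).1)
  -- each term of the series is stable under bracketing with s
  have hideal : ∀ n, ∀ b ∈ lieLowerSeries I n, ∀ c ∈ s, ⁅b, c⁆ ∈ lieLowerSeries I n := by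
    intro n
    induction n with
    | zero => exact hIs
    | succ n ih =>
      intro b hb c hc
      have : lieLowerSeries I (n + 1) ≤
          (lieLowerSeries I (n + 1)).comap (lieHomRight c) := by
        apply lieBracketSubgroup_le
        intro a ha x hx
        show ⁅⁅a, x⁆, c⁆ ∈ lieLowerSeries I (n + 1)
        rw [lie_lie]
        refine sub_mem (bracket_mem_lieBracketSubgroup ha (ih x hx c hc)) ?_
        have : ⁅⁅a, c⁆, x⁆ ∈ lieLowerSeries I (n + 1) :=
          bracket_mem_lieBracketSubgroup (hIs a ha c hc) hx
        rw [← lie_skew]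
        exact neg_mem this
      exact this hb
  have hmain : ∀ n : ℕ, ∀ x ∈ lieLowerSeries I (n + 1), ∀ y : L,
      ⁅x, y⁆ ∈ lieLowerSeries I n := by
    intro n
    induction n with
    | zero =>
      intro x hx y
      have : lieLowerSeries I 1 ≤ I.comap (lieHomRight y) := by
        apply lieBracketSubgroup_le
        intro a ha b hb
        show ⁅⁅a, b⁆, y⁆ ∈ I
        rw [lie_lie]
        exact sub_mem (hIs a ha _ (((hI b).1 hb).2 y)) (hIs b hb _ (((hI a).1 ha).2 y))
      exact this hx
    | succ n ih =>
      intro x hx y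
      have : lieLowerSeries I (n + 2) ≤
          (lieLowerSeries I (n + 1)).comap (lieHomRight y) := by
        apply lieBracketSubgroup_le
        intro a ha b hb
        show ⁅⁅a, b⁆, y⁆ ∈ lieLowerSeries I (n + 1)
        rw [lie_lie]
        refine sub_mem (bracket_mem_lieBracketSubgroup ha (ih b hb y)) ?_
        exact hideal (n + 1) b hb _ (((hI a).1 ha).2 y)
      exact this hx
  refine ⟨hmain, fun n hn => ?_⟩
  have hid : ∀ x : L, ∀ j ∈ lieLowerSeries I n, ⁅x, j⁆ ∈ lieLowerSeries I n := by
    intro x j hj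
    rw [← hn] at hj
    rw [← lie_skew]
    exact neg_mem (hmain n j hj x)
  rcases hsimple _ hid with h | h
  · exact h
  · exfalso
    apply hsne
    rw [eq_top_iff]
    intro x _
    have hxI : x ∈ I := hsub n (h ▸ AddSubgroup.mem_top x)
    exact ((hI x).1 hxI).1
end

section
/- Let g be a Lie ring, h ∈ g, and suppose g decomposes as an internal direct sum of additive subgroups g = E_{-1} ⊕ E_0 ⊕ E_1 ⊕ E_2 where E_k = {y : [h,y] = k y}, with h ∈ E_0, and suppose the characteristic p of the additive group satisfies p = 0 or p > 5 (so that E_3 = E_{-2} etc. vanish as the indices k ∈ {-1,0,1,2} are distinct and k+ℓ ∉ {-1,0,1,2} implies [E_k,E_ℓ]=0). If [E_{-1}, E_2] = 0 and E_0 = [E_{-1}, E_1], then E_2 = 0, provided 2 is invertible (no additive 2-torsion). -/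
/-- If g = E_{-1} ⊕ E_0 ⊕ E_1 ⊕ E_2 with respect to ad_h, with h ∈ E_0,
E_3 = 0 (as forced by p = 0 or p > 5), [E_{-1}, E_2] = 0,
E_0 = [E_{-1}, E_1] (so in particular h is a sum of brackets [e_{-1}, e_1]),
and no additive 2-torsion, then E_2 = 0. -/
theorem stmt_7 {L : Type*} [LieRing L] (h : L)
    (h2 : ∀ x : L, 2 • x = 0 → x = 0)
    (hh0 : ⁅h, h⁆ = 0)
    (hspan : ∀ x : L, ∃ a b c d : L, ⁅h, a⁆ = -a ∧ ⁅h, b⁆ = 0 ∧ ⁅h, c⁆ = c ∧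
      ⁅h, d⁆ = (2 : ℤ) • d ∧ x = a + b + c + d)
    (hE3 : ∀ x : L, ⁅h, x⁆ = (3 : ℤ) • x → x = 0)
    (hm1_2 : ∀ x y : L, ⁅h, x⁆ = -x → ⁅h, y⁆ = (2 : ℤ) • y → ⁅x, y⁆ = 0)
    (hE0 : h ∈ AddSubgroup.closure
      {z : L | ∃ x y : L, ⁅h, x⁆ = -x ∧ ⁅h, y⁆ = y ∧ z = ⁅x, y⁆}) :
    ∀ w : L, ⁅h, w⁆ = (2 : ℤ) • w → w = 0 := by
  intro w hw
  -- The set of z with ⁅z, w⁆ = 0 is an additive subgroup.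
  have key : ⁅h, w⁆ = 0 := by
    let S : AddSubgroup L :=
      { carrier := {z : L | ⁅z, w⁆ = 0}
        zero_mem' := by simp
        add_mem' := fun {a b} ha hb => by
          simp only [Set.mem_setOf_eq] at *
          rw [add_lie, ha, hb, add_zero]
        neg_mem' := fun {a} ha => by
          simp only [Set.mem_setOf_eq] at *
          rw [neg_lie, ha, neg_zero] }
    suffices hs : h ∈ S from hs
    refine (AddSubgroup.closure_le S).mpr ?_ hE0
    rintro z ⟨x, y, hx, hy, rfl⟩
    show ⁅⁅x, y⁆, w⁆ = 0
    have hyw : ⁅y, w⁆ = 0 := by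
      apply hE3
      rw [leibniz_lie, hy, hw, lie_smul]
      module
    have hxw : ⁅x, w⁆ = 0 := hm1_2 x w hx hw
    rw [lie_lie, hyw, hxw]
    simp
  have : (2 : ℤ) • w = 0 := by rw [← hw, key]
  apply h2
  rw [two_smul, ← two_zsmul, this]
end

section
/- Let g be a Lie ring, 𝔞 ⊆ g an abelian subring, and work modulo the additive subgroup [𝔞, g]. For any a₁,…,a_n ∈ 𝔞 and x, y ∈ g, setting f = ad_{a_1} ∘ ⋯ ∘ ad_{a_n}, one has [f(x), y] ≡ (−1)ⁿ [x, f(y)] modulo [𝔞, g]. -/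
/-- For an abelian subring 𝔞 and f a composite of n maps ad_{a_i} with a_i ∈ 𝔞,
[f(x), y] ≡ (−1)ⁿ [x, f(y)] modulo the additive subgroup [𝔞, g]. -/
theorem stmt_8 {L : Type*} [LieRing L]
    (𝔞 : AddSubgroup L)
    (habelian : ∀ a ∈ 𝔞, ∀ b ∈ 𝔞, ⁅a, b⁆ = 0)
    (l : List L) (hl : ∀ a ∈ l, a ∈ 𝔞) (x y : L) :
    ⁅l.foldr (fun a z => ⁅a, z⁆) x, y⁆
      - ((-1 : ℤ) ^ l.length) • ⁅x, l.foldr (fun a z => ⁅a, z⁆) y⁆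
      ∈ AddSubgroup.closure {w : L | ∃ a ∈ 𝔞, ∃ z : L, w = ⁅a, z⁆} := by
  -- ad's of elements of 𝔞 commute exactly
  have comm : ∀ (t : List L), (∀ b ∈ t, b ∈ 𝔞) → ∀ a ∈ 𝔞, ∀ z : L,
      t.foldr (fun a z => ⁅a, z⁆) ⁅a, z⁆ = ⁅a, t.foldr (fun a z => ⁅a, z⁆) z⁆ := by
    intro t ht a ha z
    induction t with
    | nil => rfl
    | cons b t ih =>
      have hb : b ∈ 𝔞 := ht b List.mem_cons_self
      have ih' := ih (fun c hc => ht c (List.mem_cons_of_mem _ hc))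
      simp only [List.foldr_cons, ih']
      have : ⁅⁅b, a⁆, t.foldr (fun a z => ⁅a, z⁆) z⁆ = 0 := by
        rw [habelian b hb a ha, zero_lie]
      have h2 := lie_lie b a (t.foldr (fun a z => ⁅a, z⁆) z)
      rw [this] at h2
      linear_combination (norm := abel) -h2
  induction l generalizing y with
  | nil => simpa using zero_mem _
  | cons a t ih =>
    have ha : a ∈ 𝔞 := hl a List.mem_cons_self
    have ht : ∀ b ∈ t, b ∈ 𝔞 := fun c hc => hl c (List.mem_cons_of_mem _ hc)
    have gx := t.foldr (fun a z => ⁅a, z⁆) x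
    have key : ⁅⁅a, t.foldr (fun a z => ⁅a, z⁆) x⁆, y⁆
        = ⁅a, ⁅t.foldr (fun a z => ⁅a, z⁆) x, y⁆⁆
          - ⁅t.foldr (fun a z => ⁅a, z⁆) x, ⁅a, y⁆⁆ := lie_lie a _ y
    have h1 : ⁅a, ⁅t.foldr (fun a z => ⁅a, z⁆) x, y⁆⁆
        ∈ AddSubgroup.closure {w : L | ∃ a ∈ 𝔞, ∃ z : L, w = ⁅a, z⁆} :=
      AddSubgroup.subset_closure ⟨a, ha, _, rfl⟩
    have h2 := ih ht ⁅a, y⁆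
    have hc := comm t ht a ha y
    have expand :
        ⁅(a :: t).foldr (fun a z => ⁅a, z⁆) x, y⁆
          - ((-1 : ℤ) ^ (a :: t).length) • ⁅x, (a :: t).foldr (fun a z => ⁅a, z⁆) y⁆
        = ⁅a, ⁅t.foldr (fun a z => ⁅a, z⁆) x, y⁆⁆
          - (⁅t.foldr (fun a z => ⁅a, z⁆) x, ⁅a, y⁆⁆
            - ((-1 : ℤ) ^ t.length) • ⁅x, t.foldr (fun a z => ⁅a, z⁆) ⁅a, y⁆⁆) := by
      simp only [List.foldr_cons, List.length_cons, pow_succ, hc]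
      rw [key]
      module
    rw [expand]
    exact AddSubgroup.sub_mem _ h1 h2
end
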